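/- For a lattice L the following are equivalent: (i) for every monotone function g : L → L and every finite subset F ⊆ L there is a unary polynomial function p on L with p(x) = g(x) for all x ∈ F; (ii) for all a, b, c, d ∈ L with ¬(b ≤ a) and c ≤ d there is a unary polynomial function p on L with p(a) = c and p(b) = d. -/
import Mathlib

universe u

/-- A unary polynomial function on a lattice: member of the smallest set of functions
`L → L` containing the identity and all constant functions and closed under
pointwise meet and join. -/
inductive IsUnaryLatticePolynomial {L : Type u} [Lattice L] : (L → L) → Prop
  | id : IsUnaryLatticePolynomial (fun x => x)
  | const (c : L) : IsUnaryLatticePolynomial (fun _ => c)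
  | inf {p q : L → L} : IsUnaryLatticePolynomial p → IsUnaryLatticePolynomial q →
      IsUnaryLatticePolynomial (fun x => p x ⊓ q x)
  | sup {p q : L → L} : IsUnaryLatticePolynomial p → IsUnaryLatticePolynomial q →
      IsUnaryLatticePolynomial (fun x => p x ⊔ q x)

lemma poly_sup' {L : Type u} [Lattice L] {ι : Type*} (s : Finset ι) (f : ι → L → L)
    (hf : ∀ i ∈ s, IsUnaryLatticePolynomial (f i)) :
    ∀ hs : s.Nonempty, IsUnaryLatticePolynomial (fun x => s.sup' hs fun i => f i x) := by
  induction s using Finset.cons_induction with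
  | empty => intro hs; exact absurd hs (by simp)
  | cons a t ha ih =>
    intro hs
    rcases t.eq_empty_or_nonempty with rfl | ht
    · simpa using hf a (by simp)
    · have : (fun x => (Finset.cons a t ha).sup' hs fun i => f i x)
          = fun x => f a x ⊔ t.sup' ht fun i => f i x := by
        funext x; rw [Finset.sup'_cons]
      rw [this]
      exact .sup (hf a (by simp)) (ih (fun i hi => hf i (by simp [hi])) ht)

lemma poly_inf' {L : Type u} [Lattice L] {ι : Type*} (s : Finset ι) (f : ι → L → L)
    (hf : ∀ i ∈ s, IsUnaryLatticePolynomial (f i)) :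
    ∀ hs : s.Nonempty, IsUnaryLatticePolynomial (fun x => s.inf' hs fun i => f i x) := by
  induction s using Finset.cons_induction with
  | empty => intro hs; exact absurd hs (by simp)
  | cons a t ha ih =>
    intro hs
    rcases t.eq_empty_or_nonempty with rfl | ht
    · simpa using hf a (by simp)
    · have : (fun x => (Finset.cons a t ha).inf' hs fun i => f i x)
          = fun x => f a x ⊓ t.inf' ht fun i => f i x := by
        funext x; rw [Finset.inf'_cons]
      rw [this]
      exact .inf (hf a (by simp)) (ih (fun i hi => hf i (by simp [hi])) ht)

/-- The two formulations of the unary interpolation property for a lattice are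
equivalent: interpolating every monotone function on every finite set, and two-point
interpolation of the pairs `(a, c)`, `(b, d)` with `¬ b ≤ a` and `c ≤ d`. -/
theorem stmt14 {L : Type u} [Lattice L] :
    (∀ g : L → L, Monotone g → ∀ F : Finset L,
      ∃ p : L → L, IsUnaryLatticePolynomial p ∧ ∀ x ∈ F, p x = g x) ↔
    (∀ a b c d : L, ¬ b ≤ a → c ≤ d →
      ∃ p : L → L, IsUnaryLatticePolynomial p ∧ p a = c ∧ p b = d) := by
  classical
  constructor
  · intro h a b c d hab hcd
    set g : L → L := fun x => if b ≤ x then d else c with hg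
    have hmono : Monotone g := by
      intro x y hxy
      simp only [hg]
      split_ifs with h1 h2
      · exact le_refl d
      · exact absurd (h1.trans hxy) h2
      · exact hcd
      · exact le_refl c
    obtain ⟨p, hp, hpF⟩ := h g hmono {a, b}
    refine ⟨p, hp, ?_, ?_⟩
    · rw [hpF a (by simp)]; simp [hg, hab]
    · rw [hpF b (by simp)]; simp [hg]
  · intro h g hg F
    rcases F.eq_empty_or_nonempty with rfl | hF
    · exact ⟨fun x => x, .id, by simp⟩
    have key : ∀ a b : L, ∃ p, IsUnaryLatticePolynomial p ∧
        (¬ b ≤ a → p a = g a ⊓ g b ∧ p b = g b) ∧ (b ≤ a → p = fun _ => g b) := by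
      intro a b
      by_cases hab : b ≤ a
      · exact ⟨fun _ => g b, .const _, fun h' => absurd hab h', fun _ => rfl⟩
      · obtain ⟨p, hp, h1, h2⟩ := h a b (g a ⊓ g b) (g b) hab inf_le_right
        exact ⟨p, hp, fun _ => ⟨h1, h2⟩, fun h' => absurd h' hab⟩
    choose P hP hPv hPle using key
    set q : L → L → L := fun b x => g b ⊓ F.inf' hF (fun a => P a b x) with hq
    have hqpoly : ∀ b, IsUnaryLatticePolynomial (q b) :=
      fun b => .inf (.const _) (poly_inf' F (fun a => P a b) (fun a _ => hP a b) hF)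
    have hqb : ∀ b, q b b = g b := by
      intro b
      have : F.inf' hF (fun a => P a b b) = g b := by
        apply le_antisymm
        · obtain ⟨a0, ha0⟩ := hF
          refine (Finset.inf'_le _ ha0).trans ?_
          by_cases hba : b ≤ a0
          · rw [hPle a0 b hba]
          · rw [(hPv a0 b hba).2]
        · rw [Finset.le_inf'_iff]
          intro a _
          by_cases hba : b ≤ a
          · rw [hPle a b hba]
          · rw [(hPv a b hba).2]
      simp [hq, this]
    have hqle : ∀ b, ∀ x ∈ F, q b x ≤ g x := by
      intro b x hx
      by_cases hbx : b ≤ x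
      · exact inf_le_left.trans (hg hbx)
      · refine le_trans inf_le_right ?_
        refine (Finset.inf'_le _ hx).trans ?_
        rw [(hPv x b hbx).1]
        exact inf_le_left
    refine ⟨fun x => F.sup' hF (fun b => q b x),
      poly_sup' F q (fun b _ => hqpoly b) hF, ?_⟩
    intro x hx
    apply le_antisymm
    · rw [Finset.sup'_le_iff]
      intro b _
      exact hqle b x hx
    · rw [← hqb x]
      exact Finset.le_sup' (fun b => q b x) hx
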